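/- Let S(A) = {a_n} be an independent Stanley sequence, let k ≥ κ(A), set c = a_{2^k} and A_k = {a_0, a_1, ..., a_{2^k − 1}}, and suppose a_{2^k − 1} ≥ λ(A) + ω(A). Then for every integer x, the set (A_k + x) ∪ (A_k + c + x) ∪ (A_k + 3c + x) ∪ (A_k + 4c + x) covers every integer in the set ([x, 9c + x) \ ((A_k ∪ (A_k + c) ∪ (A_k + 3c) ∪ (A_k + 4c) ∪ O(A)) + x)) ∪ (O(A) + 9c + x). -/

import Mathlib

/-- A set of integers is 3-free if it contains no 3-term arithmetic progression. -/
def ThreeFreeSet (S : Set ℤ) : Prop :=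
  ∀ x ∈ S, ∀ y ∈ S, ∀ z ∈ S, x < y → y < z → x + z ≠ 2 * y

/-- `a` is the Stanley sequence generated greedily from the finite 3-free set `A`
of nonnegative integers containing 0: `a` first enumerates `A` in increasing order,
and for `n ≥ |A|`, `a n` is the least integer exceeding `a (n-1)` keeping the
set of terms so far 3-free. -/
def IsStanleySeq (A : Finset ℤ) (a : ℕ → ℤ) : Prop :=
  (0 : ℤ) ∈ A ∧ (∀ x ∈ A, 0 ≤ x) ∧ ThreeFreeSet ↑A ∧
  StrictMono a ∧ (∀ i < A.card, a i ∈ A) ∧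
  ∀ n, A.card ≤ n →
    IsLeast {m : ℤ | a (n - 1) < m ∧ ThreeFreeSet (a '' Set.Iio n ∪ {m})} (a n)

/-- The two defining conditions of an independent Stanley sequence,
for a given λ and κ. -/
def IndepParams (a : ℕ → ℤ) (lam : ℤ) (κ : ℕ) : Prop :=
  ∀ k, κ ≤ k →
    (∀ i < 2 ^ k, a (2 ^ k + i) = a (2 ^ k) + a i) ∧
    a (2 ^ k) = 2 * a (2 ^ k - 1) + 1 - lam

/-- A Stanley sequence is independent if `IndepParams` holds for some λ and κ. -/
def Independent (a : ℕ → ℤ) : Prop := ∃ lam κ, IndepParams a lam κ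

/-- κ(A): the minimal κ witnessing independence. -/
noncomputable def kappa (a : ℕ → ℤ) : ℕ := sInf {κ | ∃ lam, IndepParams a lam κ}

/-- λ(A), recovered from the defining equation at k = κ(A). -/
noncomputable def lambdaA (a : ℕ → ℤ) : ℤ :=
  2 * a (2 ^ kappa a - 1) + 1 - a (2 ^ kappa a)

/-- The repeat factor ρ(A) = a_{2^{κ(A)}}. -/
noncomputable def rho (a : ℕ → ℤ) : ℤ := a (2 ^ kappa a)

/-- The scaling factor α(A), satisfying a_{2^k} = α·3^k for all k ≥ κ(A). -/
noncomputable def scalingFactor (a : ℕ → ℤ) : ℚ :=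
  (a (2 ^ kappa a) : ℚ) / 3 ^ kappa a

/-- An integer `x` is covered by a set `S` if there are `y < z < x` in `S`
with `y, z, x` in arithmetic progression. -/
def Covers (S : Set ℤ) (x : ℤ) : Prop :=
  ∃ y z, y ∈ S ∧ z ∈ S ∧ y < z ∧ z < x ∧ 2 * z = y + x

/-- An integer `x` is jointly covered by `S` and `T` if there are `y < z < x`
with `y ∈ S`, `z ∈ T`, and `y, z, x` in arithmetic progression. -/
def JointlyCovers (S T : Set ℤ) (x : ℤ) : Prop :=
  ∃ y z, y ∈ S ∧ z ∈ T ∧ y < z ∧ z < x ∧ 2 * z = y + x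

/-- O(A): nonnegative integers neither in the Stanley sequence nor covered by it. -/
def OSet (a : ℕ → ℤ) : Set ℤ :=
  {x | 0 ≤ x ∧ x ∉ Set.range a ∧ ¬ Covers (Set.range a) x}

/-- ω(A): the maximum element of O(A). -/
noncomputable def omegaA (a : ℕ → ℤ) : ℤ := sSup (OSet a)

/-- The translate `S + t` of a set of integers. -/
def shift (S : Set ℤ) (t : ℤ) : Set ℤ := (· + t) '' S

/-- A triadic number: a rational whose denominator in lowest terms is a power of 3. -/
def IsTriadic (q : ℚ) : Prop := ∃ j : ℕ, q.den = 3 ^ j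

/- ----------------- auxiliary lemmas ----------------- -/

lemma threeFree_mono {S T : Set ℤ} (h : S ⊆ T) (hT : ThreeFreeSet T) : ThreeFreeSet S :=
  fun x hx y hy z hz => hT x (h hx) y (h hy) z (h hz)

lemma shift_union (S T : Set ℤ) (t : ℤ) : shift (S ∪ T) t = shift S t ∪ shift T t :=
  Set.image_union _ _ _

lemma shift_shift (S : Set ℤ) (u t : ℤ) : shift (shift S u) t = shift S (u + t) := by
  ext z
  constructor
  · rintro ⟨y, ⟨s, hs, rfl⟩, rfl⟩; exact ⟨s, hs, by ring⟩
  · rintro ⟨s, hs, rfl⟩; exact ⟨s + u, ⟨s, hs, rfl⟩, by ring⟩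

lemma covers_shift {S : Set ℤ} {w : ℤ} (t : ℤ) (h : Covers S w) : Covers (shift S t) (w + t) := by
  obtain ⟨y, z, hy, hz, h1, h2, h3⟩ := h
  exact ⟨y + t, z + t, ⟨y, hy, rfl⟩, ⟨z, hz, rfl⟩, by omega, by omega, by omega⟩

/-- Lemma 3.2(e): `(A_k + x) ∪ (A_k + c + x) ∪ (A_k + 3c + x) ∪ (A_k + 4c + x)`
covers `([x, 9c+x) \ ((A_k ∪ (A_k+c) ∪ (A_k+3c) ∪ (A_k+4c) ∪ O(A)) + x)) ∪ (O(A) + 9c + x)`. -/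
theorem cover_part_e (A : Finset ℤ) (a : ℕ → ℤ)
    (hA : IsStanleySeq A a) (hInd : Independent a) (k : ℕ) (hk : kappa a ≤ k)
    (c : ℤ) (hc : c = a (2 ^ k))
    (Ak : Set ℤ) (hAk : Ak = a '' Set.Iio (2 ^ k))
    (hbound : lambdaA a + omegaA a ≤ a (2 ^ k - 1)) :
    ∀ x : ℤ,
      ∀ z ∈ (Set.Ico x (9 * c + x) \
            shift (Ak ∪ shift Ak c ∪ shift Ak (3 * c) ∪ shift Ak (4 * c) ∪ OSet a) x) ∪
          shift (OSet a) (9 * c + x),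
        Covers (shift Ak x ∪ shift Ak (c + x) ∪ shift Ak (3 * c + x) ∪ shift Ak (4 * c + x)) z := by
  obtain ⟨h0A, hApos, hAfree, hmono, hmemA, hgreedy⟩ := hA
  have hcard : 0 < A.card := Finset.card_pos.mpr ⟨0, h0A⟩
  -- the first A.card terms enumerate A
  have himgF : (Finset.range A.card).image a = A := by
    apply Finset.eq_of_subset_of_card_le
    · intro y hy
      obtain ⟨i, hi, rfl⟩ := Finset.mem_image.mp hy
      exact hmemA i (Finset.mem_range.mp hi)
    · rw [Finset.card_image_of_injective _ hmono.injective, Finset.card_range]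
  have himg : a '' Set.Iio (A.card) = ↑A := by
    conv_rhs => rw [← himgF]
    rw [Finset.coe_image, Finset.coe_range]
  have ha0 : a 0 = 0 := by
    have h0' : (0 : ℤ) ∈ a '' Set.Iio A.card := by
      rw [himg]; exact_mod_cast h0A
    obtain ⟨i, _, hai⟩ := h0'
    have h1 : a 0 ≤ a i := hmono.monotone (Nat.zero_le i)
    have h2 : 0 ≤ a 0 := hApos _ (hmemA 0 hcard)
    omega
  have hge : ∀ n : ℕ, (n : ℤ) ≤ a n := by
    intro n
    induction n with
    | zero => simp [ha0]
    | succ m ih =>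
      have h := hmono (show m < m + 1 by omega)
      push_cast
      omega
  -- every initial segment is 3-free
  have hfreeW : ∀ m : ℕ, ThreeFreeSet (a '' Set.Iio (A.card + m)) := by
    intro m
    induction m with
    | zero => rw [Nat.add_zero, himg]; exact hAfree
    | succ m ih =>
      have hg := hgreedy (A.card + m) (Nat.le_add_right _ _)
      have hTF := hg.1.2
      have hiio : Set.Iio (A.card + (m+1)) = insert (A.card + m) (Set.Iio (A.card + m)) := by
        ext j; simp; omega
      rw [hiio, Set.image_insert_eq]
      rw [Set.union_singleton] at hTF
      exact hTF
  have hfree : ∀ n : ℕ, ThreeFreeSet (a '' Set.Iio n) := by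
    intro n
    rcases le_or_gt A.card n with h | h
    · obtain ⟨m, rfl⟩ := Nat.exists_eq_add_of_le h
      exact hfreeW m
    · exact threeFree_mono (Set.image_mono (f := a) (Set.Iio_subset_Iio h.le)) (himg ▸ hAfree)
  -- any nonmember above the seed is covered
  have hcov : ∀ x : ℤ, a (A.card - 1) < x → x ∉ Set.range a → Covers (Set.range a) x := by
    intro x hx hxr
    have h0le : (0:ℤ) ≤ a (A.card - 1) := le_trans (Int.natCast_nonneg _) (hge _)
    have hex : ∃ n : ℕ, x < a n := by
      refine ⟨(x+1).toNat, ?_⟩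
      have h1 := Int.self_le_toNat (x+1)
      have h2 := hge (x+1).toNat
      omega
    have hxn : x < a (Nat.find hex) := Nat.find_spec hex
    set n := Nat.find hex with hndef
    have hnpos : 0 < n := by
      rcases Nat.eq_zero_or_pos n with h | h
      · rw [h, ha0] at hxn; omega
      · exact h
    have hprev : a (n-1) < x := by
      have h1 : ¬ x < a (n-1) := Nat.find_min hex (by omega)
      have h2 : a (n-1) ≠ x := fun h => hxr ⟨n-1, h⟩
      omega
    have hncard : A.card ≤ n := by
      by_contra h
      push_neg at h
      have : a n ≤ a (A.card - 1) := hmono.monotone (by omega)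
      omega
    have hg := hgreedy n hncard
    have hnTF : ¬ ThreeFreeSet (a '' Set.Iio n ∪ {x}) := by
      intro hTF
      have := hg.2 ⟨hprev, hTF⟩
      omega
    unfold ThreeFreeSet at hnTF
    push_neg at hnTF
    obtain ⟨u, hu, v, hv, w, hw, huv, hvw, heq⟩ := hnTF
    have hlt : ∀ s ∈ a '' Set.Iio n, s < x := by
      rintro s ⟨j, hj, rfl⟩
      have hj' : j < n := hj
      have : a j ≤ a (n-1) := hmono.monotone (by omega)
      omega
    have hu' : u ∈ a '' Set.Iio n := by
      rcases hu with h | h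
      · exact h
      · exfalso
        simp only [Set.mem_singleton_iff] at h
        rcases hv with h2 | h2
        · have := hlt v h2; omega
        · simp only [Set.mem_singleton_iff] at h2; omega
    have hv' : v ∈ a '' Set.Iio n := by
      rcases hv with h | h
      · exact h
      · exfalso
        simp only [Set.mem_singleton_iff] at h
        rcases hw with h2 | h2
        · have := hlt w h2; omega
        · simp only [Set.mem_singleton_iff] at h2; omega
    have hwx : w = x := by
      rcases hw with h | h
      · exact absurd heq (hfree n u hu' v hv' w h huv hvw)
      · simpa using h
    exact ⟨u, v, (Set.image_subset_range a _) hu', (Set.image_subset_range a _) hv',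
      huv, hlt v hv', by omega⟩
  have hbdd : BddAbove (OSet a) := by
    refine ⟨a (A.card - 1), fun o ho => ?_⟩
    by_contra h
    push_neg at h
    exact ho.2.2 (hcov o h ho.2.1)
  -- independence at kappa with lambdaA
  obtain ⟨lam0, κ0, hlk⟩ := hInd
  have hne : {κ | ∃ lam, IndepParams a lam κ}.Nonempty := ⟨κ0, lam0, hlk⟩
  obtain ⟨lam1, hlam1⟩ := Nat.sInf_mem hne
  have hP : IndepParams a (lambdaA a) (kappa a) := by
    have h1 := (hlam1 (kappa a) le_rfl).2
    have h2 : lam1 = lambdaA a := by unfold lambdaA; omega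
    exact h2 ▸ hlam1
  have hNk : 1 ≤ 2^k := Nat.one_le_two_pow
  have he1 : 2^(k+1) = 2 * 2^k := by ring
  have he2 : 2^(k+2) = 4 * 2^k := by ring
  have he3 : 2^(k+3) = 8 * 2^k := by ring
  have hPk := hP k hk
  have hPk1 := hP (k+1) (by omega)
  have hPk2 := hP (k+2) (by omega)
  have hPk3 := hP (k+3) (by omega)
  have hb : c = 2 * a (2^k - 1) + 1 - lambdaA a := hc ▸ hPk.2
  have hm1 : a (2^(k+1) - 1) = c + a (2^k - 1) := by
    have h := hPk.1 (2^k - 1) (by omega)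
    rw [show 2^k + (2^k - 1) = 2^(k+1) - 1 by omega] at h
    rw [h, ← hc]
  have h3c : a (2^(k+1)) = 3 * c := by
    have h := hPk1.2
    rw [hm1] at h
    omega
  have hm2 : a (2^(k+2) - 1) = 4 * c + a (2^k - 1) := by
    have h := hPk1.1 (2^(k+1) - 1) (by omega)
    rw [show 2^(k+1) + (2^(k+1) - 1) = 2^(k+2) - 1 by omega] at h
    rw [h, h3c, hm1]; ring
  have h9c : a (2^(k+2)) = 9 * c := by
    have h := hPk2.2
    rw [hm2] at h
    omega
  have hm3 : a (2^(k+3) - 1) = 13 * c + a (2^k - 1) := by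
    have h := hPk2.1 (2^(k+2) - 1) (by omega)
    rw [show 2^(k+2) + (2^(k+2) - 1) = 2^(k+3) - 1 by omega] at h
    rw [h, h9c, hm2]; ring
  have h27c : a (2^(k+3)) = 27 * c := by
    have h := hPk3.2
    rw [hm3] at h
    omega
  -- decomposition of the first 2^(k+2) terms
  have hAk' : ∀ i : ℕ, i < 2^k → a i ∈ Ak := fun i hi => hAk ▸ ⟨i, hi, rfl⟩
  have hmemU : ∀ n : ℕ, n < 2^(k+2) →
      a n ∈ Ak ∪ shift Ak c ∪ shift Ak (3*c) ∪ shift Ak (4*c) := by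
    intro n hn
    rcases lt_or_ge n (2^k) with h1 | h1
    · exact Or.inl (Or.inl (Or.inl (hAk' n h1)))
    rcases lt_or_ge n (2^(k+1)) with h2 | h2
    · have hi : n - 2^k < 2^k := by omega
      have h := hPk.1 (n - 2^k) hi
      rw [show 2^k + (n - 2^k) = n by omega] at h
      exact Or.inl (Or.inl (Or.inr ⟨a (n - 2^k), hAk' _ hi, by rw [h, ← hc]; ring⟩))
    rcases lt_or_ge n (2^(k+1) + 2^k) with h3 | h3
    · have hi : n - 2^(k+1) < 2^(k+1) := by omega
      have h4 := hPk1.1 (n - 2^(k+1)) hi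
      rw [show 2^(k+1) + (n - 2^(k+1)) = n by omega] at h4
      have hi' : n - 2^(k+1) < 2^k := by omega
      exact Or.inl (Or.inr ⟨a (n - 2^(k+1)), hAk' _ hi', by rw [h4, h3c]; ring⟩)
    · have hi : n - 2^(k+1) < 2^(k+1) := by omega
      have h4 := hPk1.1 (n - 2^(k+1)) hi
      rw [show 2^(k+1) + (n - 2^(k+1)) = n by omega] at h4
      have hj : n - 2^(k+1) - 2^k < 2^k := by omega
      have h5 := hPk.1 (n - 2^(k+1) - 2^k) hj
      rw [show 2^k + (n - 2^(k+1) - 2^k) = n - 2^(k+1) by omega] at h5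
      exact Or.inr ⟨a (n - 2^(k+1) - 2^k), hAk' _ hj, by rw [h4, h5, h3c, ← hc]; ring⟩
  have hc1 : (1:ℤ) ≤ c := by
    have h1 := hge (2^k)
    have h2 : (1 : ℤ) ≤ ((2^k : ℕ) : ℤ) := by exact_mod_cast hNk
    omega
  have hbge : (0:ℤ) ≤ a (2^k - 1) := le_trans (Int.natCast_nonneg _) (hge _)
  have hblt : a (2^k - 1) < c := by rw [hc]; exact hmono (by omega)
  intro x z hz
  have hgoalset : shift Ak x ∪ shift Ak (c+x) ∪ shift Ak (3*c+x) ∪ shift Ak (4*c+x)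
      = shift (Ak ∪ shift Ak c ∪ shift Ak (3*c) ∪ shift Ak (4*c)) x := by
    rw [shift_union, shift_union, shift_union, shift_shift, shift_shift, shift_shift]
  rcases hz with ⟨hzin, hznot⟩ | hzo
  · -- z in [x, 9c+x) and not in the shifted union
    obtain ⟨hx1, hx2⟩ := hzin
    have hw0 : 0 ≤ z - x := by omega
    have hw9 : z - x < 9 * c := by omega
    have hwnot : z - x ∉ (Ak ∪ shift Ak c ∪ shift Ak (3*c) ∪ shift Ak (4*c)) ∪ OSet a := by
      intro hmem
      exact hznot ⟨z - x, hmem, by show z - x + x = z; omega⟩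
    have hwU : z - x ∉ Ak ∪ shift Ak c ∪ shift Ak (3*c) ∪ shift Ak (4*c) :=
      fun h => hwnot (Or.inl h)
    have hwO : z - x ∉ OSet a := fun h => hwnot (Or.inr h)
    have hcw : Covers (Ak ∪ shift Ak c ∪ shift Ak (3*c) ∪ shift Ak (4*c)) (z - x) := by
      by_cases hr : z - x ∈ Set.range a
      · obtain ⟨n, hn⟩ := hr
        have hlt9 : a n < a (2^(k+2)) := by rw [h9c]; omega
        exact absurd (hmemU n (hmono.lt_iff_lt.mp hlt9)) (hn ▸ hwU)
      · by_cases hcv : Covers (Set.range a) (z - x)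
        · obtain ⟨y, zz, ⟨p, rfl⟩, ⟨q, rfl⟩, h1, h2, h3⟩ := hcv
          have hq : q < 2^(k+2) := by
            have : a q < a (2^(k+2)) := by rw [h9c]; omega
            exact hmono.lt_iff_lt.mp this
          have hp : p < q := hmono.lt_iff_lt.mp h1
          exact ⟨a p, a q, hmemU p (by omega), hmemU q hq, h1, h2, h3⟩
        · exact absurd ⟨hw0, hr, hcv⟩ hwO
    rw [hgoalset]
    have h := covers_shift x hcw
    rwa [show z - x + x = z by ring] at h
  · -- z = o + 9c + x with o ∈ O(A)
    obtain ⟨o, ho, hoz⟩ := hzo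
    have hoz' : o + (9 * c + x) = z := hoz
    have ho0 : (0:ℤ) ≤ o := ho.1
    have hor : o ∉ Set.range a := ho.2.1
    have hocv : ¬ Covers (Set.range a) o := ho.2.2
    have ho1 : (1:ℤ) ≤ o := by
      rcases eq_or_lt_of_le ho0 with h | h
      · exact absurd ⟨0, by omega⟩ hor
      · omega
    have homeg : o ≤ omegaA a := le_csSup hbdd ho
    have hoc' : o < c := by linarith [hbound, homeg, hb, hbge]
    have htr : (o + 9*c) ∉ Set.range a := by
      rintro ⟨n, hn⟩
      have hn1 : 2^(k+2) < n := by
        have : a (2^(k+2)) < a n := by rw [h9c]; omega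
        exact hmono.lt_iff_lt.mp this
      have hn2 : n < 2^(k+3) := by
        have : a n < a (2^(k+3)) := by rw [h27c]; omega
        exact hmono.lt_iff_lt.mp this
      have hi : n - 2^(k+2) < 2^(k+2) := by omega
      have h4 := hPk2.1 (n - 2^(k+2)) hi
      rw [show 2^(k+2) + (n - 2^(k+2)) = n by omega, h9c] at h4
      exact hor ⟨n - 2^(k+2), by omega⟩
    have htO : (o + 9*c) ∉ OSet a := by
      intro h
      have h1 : o + 9*c ≤ omegaA a := le_csSup hbdd h
      linarith [hbound, hb, hbge]
    have htcov : Covers (Set.range a) (o + 9*c) := by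
      by_contra h
      exact htO ⟨by linarith, htr, h⟩
    obtain ⟨y, zz, ⟨p, rfl⟩, ⟨q, rfl⟩, h1, h2, h3⟩ := htcov
    have hpq : p < q := hmono.lt_iff_lt.mp h1
    have hq2 : q < 2^(k+2) := by
      by_contra hq2
      push_neg at hq2
      have hq3 : q < 2^(k+3) := by
        have : a q < a (2^(k+3)) := by rw [h27c]; omega
        exact hmono.lt_iff_lt.mp this
      have hi : q - 2^(k+2) < 2^(k+2) := by omega
      have h4 := hPk2.1 (q - 2^(k+2)) hi
      rw [show 2^(k+2) + (q - 2^(k+2)) = q by omega, h9c] at h4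
      have hio : a (q - 2^(k+2)) < o := by omega
      by_cases hpbig : 2^(k+2) ≤ p
      · have hpi : p - 2^(k+2) < 2^(k+2) := by omega
        have h5 := hPk2.1 (p - 2^(k+2)) hpi
        rw [show 2^(k+2) + (p - 2^(k+2)) = p by omega, h9c] at h5
        exact hocv ⟨a (p - 2^(k+2)), a (q - 2^(k+2)), ⟨_, rfl⟩, ⟨_, rfl⟩,
          by omega, hio, by omega⟩
      · push_neg at hpbig
        have hple : a p ≤ a (2^(k+2) - 1) := hmono.monotone (by omega)
        rw [hm2] at hple
        have hai0 : (0:ℤ) ≤ a (q - 2^(k+2)) := le_trans (Int.natCast_nonneg _) (hge _)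
        omega
    have hcovU : Covers (Ak ∪ shift Ak c ∪ shift Ak (3*c) ∪ shift Ak (4*c)) (o + 9*c) :=
      ⟨a p, a q, hmemU p (by omega), hmemU q hq2, h1, h2, h3⟩
    rw [hgoalset]
    have h := covers_shift x hcovU
    rwa [show o + 9*c + x = z by omega] at h
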